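/- Let K be a field of characteristic zero, n ≥ 2, and let D = ∂_{x_1} + Σ_{i=2}^{n} (a_i·x_i + b_i)·∂_{x_i} be the K-derivation of K[x_1,…,x_n] with a_i, b_i ∈ K[x_1,…,x_{i-1}] for each i. If a_n has degree at least 1 in the variable x_{n-1}, then Im D = D(K[x_1,…,x_n]) is not a Mathieu–Zhao space of K[x_1,…,x_n]. -/

import Mathlib

open MvPolynomial

/-- A `K`-subspace `M` of `R` is a Mathieu–Zhao space if for all `a, b ∈ R` such that
`a ^ m ∈ M` for all `m ≥ 1`, there exists `N` such that `b * a ^ m ∈ M` for all `m ≥ N`. -/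
def IsMathieuZhao (K : Type*) {R : Type*} [Field K] [CommRing R] [Algebra K R]
    (M : Submodule K R) : Prop :=
  ∀ a b : R, (∀ m : ℕ, 1 ≤ m → a ^ m ∈ M) →
    ∃ N : ℕ, ∀ m : ℕ, N ≤ m → b * a ^ m ∈ M

/-- A `K`-derivation `D` of `R` is simple if the only ideals `I` of `R` with `D(I) ⊆ I`
are `0` and `R`. -/
def Derivation.IsSimple {K R : Type*} [CommRing K] [CommRing R] [Algebra K R]
    (D : Derivation K R R) : Prop :=
  ∀ I : Ideal R, (∀ a ∈ I, D a ∈ I) → I = ⊥ ∨ I = ⊤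

section Aux

variable {K : Type*} [Field K] {σ : Type*}

private lemma coeff_pderiv' (i : σ) (u : σ →₀ ℕ) (f : MvPolynomial σ K) :
    coeff u (pderiv i f) = coeff (u + Finsupp.single i 1) f * ((u i + 1 : ℕ) : K) := by
  classical
  induction f using MvPolynomial.induction_on' with
  | monomial s r =>
    rw [pderiv_monomial, coeff_monomial, coeff_monomial]
    by_cases h : s = u + Finsupp.single i 1
    · subst h
      have h1 : u + Finsupp.single i 1 - Finsupp.single i 1 = u := by
        ext j; simp [Finsupp.tsub_apply]
      rw [if_pos h1, if_pos rfl]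
      congr 1
      simp
    · rw [if_neg h]
      by_cases h2 : s - Finsupp.single i 1 = u
      · have hsi : s i = 0 := by
          by_contra hsi
          apply h
          rw [← h2, tsub_add_cancel_of_le]
          rwa [Finsupp.single_le_iff, Nat.one_le_iff_ne_zero]
        rw [if_pos h2, hsi]
        simp
      · rw [if_neg h2, zero_mul]
  | add f g hf hg => simp [hf, hg, add_mul]

private lemma degreeOf_pderiv_le' (i j : σ) (f : MvPolynomial σ K) :
    degreeOf j (pderiv i f) ≤ degreeOf j f := by
  classical
  rw [degreeOf_le_iff]
  intro u hu
  rw [mem_support_iff, coeff_pderiv'] at hu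
  have h1 : coeff (u + Finsupp.single i 1) f ≠ 0 := left_ne_zero_of_mul hu
  calc u j ≤ (u + Finsupp.single i 1 : σ →₀ ℕ) j := by simp
    _ ≤ degreeOf j f := monomial_le_degreeOf j (mem_support_iff.2 h1)

private lemma pderiv_self_bound' {i : σ} {f : MvPolynomial σ K} (h : pderiv i f ≠ 0) :
    degreeOf i (pderiv i f) < degreeOf i f := by
  classical
  have hpos : 0 < degreeOf i f := by
    by_contra hz
    have hz0 : degreeOf i f = 0 := by omega
    apply h
    apply MvPolynomial.ext
    intro u
    rw [coeff_pderiv', coeff_zero]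
    have hc0 : coeff (u + Finsupp.single i 1) f = 0 := by
      by_contra hc
      have h2 := monomial_le_degreeOf i (mem_support_iff.2 hc)
      simp only [Finsupp.add_apply, Finsupp.single_eq_same, hz0] at h2
      omega
    simp [hc0]
  rw [degreeOf_lt_iff hpos]
  intro u hu
  rw [mem_support_iff, coeff_pderiv'] at hu
  have h1 := monomial_le_degreeOf i (mem_support_iff.2 (left_ne_zero_of_mul hu))
  simp only [Finsupp.add_apply, Finsupp.single_eq_same] at h1
  omega

private lemma pderiv_zero_of_degreeOf_zero' {i : σ} {f : MvPolynomial σ K}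
    (h : degreeOf i f = 0) : pderiv i f = 0 := by
  by_contra hne
  have := pderiv_self_bound' hne
  omega

private lemma pderiv_step' [CharZero K] {i : σ} {f : MvPolynomial σ K}
    (h : 1 ≤ degreeOf i f) :
    pderiv i f ≠ 0 ∧ degreeOf i (pderiv i f) = degreeOf i f - 1 := by
  classical
  have hf : f ≠ 0 := by rintro rfl; simp at h
  obtain ⟨s, hs, hsv⟩ := Finset.exists_mem_eq_sup f.support (support_nonempty.mpr hf)
      (fun u => u i)
  have hd : degreeOf i f = s i := by rw [degreeOf_eq_sup]; exact hsv
  have hsi : 1 ≤ s i := by omega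
  have hle : Finsupp.single i 1 ≤ s := Finsupp.single_le_iff.2 hsi
  have hadd : (s - Finsupp.single i 1) + Finsupp.single i 1 = s := tsub_add_cancel_of_le hle
  have hui : (s - Finsupp.single i 1 : σ →₀ ℕ) i = s i - 1 := by
    simp [Finsupp.tsub_apply]
  have hco : coeff (s - Finsupp.single i 1) (pderiv i f) = coeff s f * ((s i : ℕ) : K) := by
    rw [coeff_pderiv', hadd, hui]
    congr 2
    omega
  have hcne : coeff (s - Finsupp.single i 1) (pderiv i f) ≠ 0 := by
    rw [hco]
    exact mul_ne_zero (mem_support_iff.1 hs) (Nat.cast_ne_zero.2 (by omega))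
  have hne : pderiv i f ≠ 0 := fun hh => hcne (by rw [hh, coeff_zero])
  refine ⟨hne, le_antisymm ?_ ?_⟩
  · have := pderiv_self_bound' hne
    omega
  · have := monomial_le_degreeOf i (mem_support_iff.2 hcne)
    omega

private lemma iterate_pderiv' [CharZero K] {i : σ} :
    ∀ (d : ℕ) (f : MvPolynomial σ K), degreeOf i f = d → f ≠ 0 →
      (pderiv i)^[d] f ≠ 0 ∧ degreeOf i ((pderiv i)^[d] f) = 0 := by
  intro d
  induction d with
  | zero => intro f h hf; simpa using ⟨hf, h⟩
  | succ k ih =>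
    intro f h hf
    obtain ⟨h1, h2⟩ := pderiv_step' (i := i) (f := f) (by omega)
    rw [Function.iterate_succ_apply]
    exact ih (pderiv i f) (by omega) h1

private lemma degreeOf_mul_eq' {N : ℕ} (i : Fin (N + 1)) (f g : MvPolynomial (Fin (N + 1)) K)
    (hf : f ≠ 0) (hg : g ≠ 0) :
    degreeOf i (f * g) = degreeOf i f + degreeOf i g := by
  classical
  have key : ∀ p : MvPolynomial (Fin (N + 1)) K,
      degreeOf i p = (finSuccEquiv K N (rename (Equiv.swap 0 i) p)).natDegree := by
    intro p
    rw [natDegree_finSuccEquiv]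
    have h := degreeOf_rename_of_injective (f := Equiv.swap (0 : Fin (N+1)) i)
      (Equiv.swap (0 : Fin (N+1)) i).injective (p := p) i
    rw [Equiv.swap_apply_right] at h
    exact h.symm
  have hri : Function.Injective
      (rename (Equiv.swap (0 : Fin (N+1)) i) : MvPolynomial (Fin (N+1)) K → _) :=
    rename_injective _ (Equiv.swap 0 i).injective
  have hrf : rename (Equiv.swap (0 : Fin (N+1)) i) f ≠ 0 := by
    intro hh; exact hf (hri (by rw [hh, map_zero]))
  have hrg : rename (Equiv.swap (0 : Fin (N+1)) i) g ≠ 0 := by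
    intro hh; exact hg (hri (by rw [hh, map_zero]))
  have h1 : finSuccEquiv K N (rename (Equiv.swap (0 : Fin (N+1)) i) f) ≠ 0 := by
    intro hh; exact hrf ((finSuccEquiv K N).injective (by rw [hh, map_zero]))
  have h2 : finSuccEquiv K N (rename (Equiv.swap (0 : Fin (N+1)) i) g) ≠ 0 := by
    intro hh; exact hrg ((finSuccEquiv K N).injective (by rw [hh, map_zero]))
  rw [key, key, key, map_mul, map_mul, Polynomial.natDegree_mul h1 h2]

private lemma degreeOf_C_mul_eq' {c : K} (hc : c ≠ 0) (i : σ) (f : MvPolynomial σ K) :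
    degreeOf i (C c * f) = degreeOf i f := by
  refine le_antisymm (degreeOf_C_mul_le f i c) ?_
  have hstep : f = C c⁻¹ * (C c * f) := by
    rw [← mul_assoc, ← C_mul, inv_mul_cancel₀ hc, C_1, one_mul]
  conv_lhs => rw [hstep]
  exact degreeOf_C_mul_le _ i _

private lemma degreeOf_neg' (i : σ) (f : MvPolynomial σ K) :
    degreeOf i (-f) = degreeOf i f := by
  have h := degreeOf_C_mul_eq' (neg_ne_zero.mpr (one_ne_zero (α := K))) i f
  have hc : (C (-1 : K) : MvPolynomial σ K) = -1 := by simp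
  rw [hc, neg_one_mul] at h
  exact h

private lemma derivation_sum_apply' {ι : Type*} (s : Finset ι)
    (d : ι → Derivation K (MvPolynomial σ K) (MvPolynomial σ K)) (x : MvPolynomial σ K) :
    (∑ j ∈ s, d j) x = ∑ j ∈ s, d j x := by
  induction s using Finset.cons_induction with
  | empty => simp
  | cons a s ha ih => rw [Finset.sum_cons, Finset.sum_cons, Derivation.add_apply, ih]

end Aux

/-- For `D = ∂_{x₁} + Σ_{i=2}^{n} (aᵢ xᵢ + bᵢ) ∂_{xᵢ}` with
`aᵢ, bᵢ ∈ K[x₁, …, x_{i-1}]`: if `deg_{x_{n-1}} aₙ ≥ 1`, then `Im D` is not a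
Mathieu–Zhao space of `K[x₁, …, xₙ]`. (Variables are indexed by `Fin n`,
with `X ⟨0, _⟩ = x₁` and `X ⟨n-1, _⟩ = xₙ`.) -/
theorem statement6 (K : Type*) [Field K] [CharZero K]
    (n : ℕ) (hn : 2 ≤ n)
    (a b : Fin n → MvPolynomial (Fin n) K)
    (ha : ∀ i : Fin n, a i ∈ supported K {j : Fin n | j < i})
    (hb : ∀ i : Fin n, b i ∈ supported K {j : Fin n | j < i})
    (D : Derivation K (MvPolynomial (Fin n) K) (MvPolynomial (Fin n) K))
    (hD1 : D (X (⟨0, by omega⟩ : Fin n)) = 1)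
    (hDi : ∀ i : Fin n, i ≠ ⟨0, by omega⟩ → D (X i) = a i * X i + b i)
    (hdeg : 1 ≤ degreeOf (⟨n - 2, by omega⟩ : Fin n) (a ⟨n - 1, by omega⟩)) :
    ¬ IsMathieuZhao K (LinearMap.range D.toLinearMap) := by
  intro hMZ
  obtain ⟨N, rfl⟩ : ∃ N, n = N + 2 := ⟨n - 2, by omega⟩
  let m : Fin (N + 2) := ⟨N + 1, by omega⟩
  let p : Fin (N + 2) := ⟨N, by omega⟩
  let z : Fin (N + 2) := ⟨0, by omega⟩
  have hD1' : D (X z) = 1 := hD1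
  have hDi' : ∀ i : Fin (N + 2), i ≠ z → D (X i) = a i * X i + b i := fun i hi => hDi i hi
  have hdeg' : 1 ≤ degreeOf p (a m) := hdeg
  have hzm : z ≠ m := by simp [Fin.ext_iff, z, m]
  have hmz : m ≠ z := by simp [Fin.ext_iff, z, m]
  have ham : a m ≠ 0 := by intro hh; rw [hh] at hdeg'; simp at hdeg'
  have hsup0 : ∀ (i t : Fin (N + 2)) (q : MvPolynomial (Fin (N + 2)) K),
      q ∈ supported K {j : Fin (N + 2) | j < i} → ¬ t < i →
      pderiv t q = 0 ∧ degreeOf t q = 0 := by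
    intro i t q hq ht
    have hv : t ∉ q.vars := fun hvt => ht (mem_supported.1 hq hvt)
    refine ⟨pderiv_eq_zero_of_notMem_vars hv, Nat.le_zero.1 (degreeOf_le_iff.2 ?_)⟩
    intro u hu
    by_contra hut
    exact hv ((mem_vars t).2 ⟨u, hu, Finsupp.mem_support_iff.2 (by omega)⟩)
  have hmtop : ∀ i : Fin (N + 2), ¬ m < i := by
    intro i hi
    rw [Fin.lt_def] at hi
    have h2 := i.2
    have h3 : m.val = N + 1 := rfl
    omega
  -- commutator identity
  have hcomm : ∀ f : MvPolynomial (Fin (N + 2)) K,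
      pderiv m (D f) = D (pderiv m f) + a m * pderiv m f := by
    have hbr : ⁅(pderiv m : Derivation K (MvPolynomial (Fin (N + 2)) K) (MvPolynomial (Fin (N + 2)) K)), D⁆ = a m • pderiv m := by
      apply derivation_ext
      intro i
      rw [Derivation.commutator_apply, Derivation.smul_apply]
      by_cases h0 : i = z
      · rw [h0, hD1', pderiv_X_of_ne hzm]
        simp
      · by_cases him : i = m
        · rw [him, hDi' m hmz, pderiv_X_self, map_add, pderiv_mul, pderiv_X_self,
            (hsup0 m m (a m) (ha m) (lt_irrefl m)).1, (hsup0 m m (b m) (hb m) (lt_irrefl m)).1]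
          simp
        · rw [hDi' i h0, pderiv_X_of_ne him, map_add, pderiv_mul,
            (hsup0 i m (a i) (ha i) (hmtop i)).1, (hsup0 i m (b i) (hb i) (hmtop i)).1,
            pderiv_X_of_ne him]
          simp
    intro f
    have hfx := DFunLike.congr_fun hbr f
    rw [Derivation.commutator_apply, Derivation.smul_apply, smul_eq_mul] at hfx
    exact sub_eq_iff_eq_add'.1 hfx
  have hpam : pderiv m (a m) = 0 := (hsup0 m m (a m) (ha m) (lt_irrefl m)).1
  -- iterated identity
  have hiter : ∀ (k : ℕ) (f : MvPolynomial (Fin (N + 2)) K),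
      (pderiv m)^[k] (D f) = D ((pderiv m)^[k] f) + k • (a m * (pderiv m)^[k] f) := by
    intro k
    induction k with
    | zero => intro f; simp
    | succ k ih =>
      intro f
      rw [Function.iterate_succ_apply', ih f, map_add, hcomm ((pderiv m)^[k] f),
        map_nsmul, pderiv_mul, hpam, zero_mul, zero_add, ← Function.iterate_succ_apply' (⇑(pderiv m)) k f,
        succ_nsmul]
      abel
  -- claim A : degree bound for D on polynomials without x_m
  have claimA : ∀ g : MvPolynomial (Fin (N + 2)) K, pderiv m g = 0 →
      degreeOf p (D g) ≤ degreeOf p g := by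
    intro g hg
    have hrep : D g = ∑ i : Fin (N + 2), D (X i) * pderiv i g := by
      have hDrep : D = ∑ i : Fin (N + 2), D (X i) • pderiv i := by
        apply derivation_ext
        intro j
        rw [derivation_sum_apply', Finset.sum_eq_single j]
        · rw [Derivation.smul_apply, pderiv_X_self, smul_eq_mul, mul_one]
        · intro i _ hij
          rw [Derivation.smul_apply, pderiv_X_of_ne (Ne.symm hij), smul_zero]
        · intro hj; exact absurd (Finset.mem_univ j) hj
      conv_lhs => rw [hDrep]
      rw [derivation_sum_apply']
      exact Finset.sum_congr rfl fun i _ => by rw [Derivation.smul_apply, smul_eq_mul]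
    rw [hrep]
    refine (degreeOf_sum_le p Finset.univ _).trans (Finset.sup_le ?_)
    intro i _
    by_cases him : i = m
    · rw [him, hg, mul_zero, degreeOf_zero]; exact Nat.zero_le _
    · have hplt : ¬ p < i := by
        intro hlt
        rw [Fin.lt_def] at hlt
        have h1 := i.2
        have h2 : i.1 ≠ N + 1 := fun hh => him (Fin.ext hh)
        have h3 : p.val = N := rfl
        omega
      by_cases hip : i = p
      · rw [hip]
        have hDXp : degreeOf p (D (X p)) ≤ 1 := by
          by_cases h0 : p = z
          · rw [h0, hD1']
            have h1 : degreeOf z (1 : MvPolynomial (Fin (N + 2)) K) = 0 := by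
              simpa using degreeOf_C (1 : K) z
            omega
          · rw [hDi' p h0]
            have ha0 := (hsup0 p p (a p) (ha p) (lt_irrefl p)).2
            have hb0 := (hsup0 p p (b p) (hb p) (lt_irrefl p)).2
            have hXp : degreeOf p (X p : MvPolynomial (Fin (N + 2)) K) = 1 := by
              rw [degreeOf_X]; simp
            refine (degreeOf_add_le _ _ _).trans ?_
            have h5 : degreeOf p (a p * X p) ≤ 1 := by
              refine (degreeOf_mul_le _ _ _).trans ?_
              rw [ha0, hXp]
            exact max_le h5 (by omega)
        by_cases hzero : pderiv p g = 0
        · rw [hzero, mul_zero, degreeOf_zero]; exact Nat.zero_le _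
        · have hlt := pderiv_self_bound' hzero
          have h6 := degreeOf_mul_le p (D (X p)) (pderiv p g)
          omega
      · have hDXi : degreeOf p (D (X i)) = 0 := by
          by_cases h0 : i = z
          · rw [h0, hD1']
            simpa using degreeOf_C (1 : K) p
          · rw [hDi' i h0]
            have ha0 := (hsup0 i p (a i) (ha i) hplt).2
            have hb0 := (hsup0 i p (b i) (hb i) hplt).2
            have hXi : degreeOf p (X i : MvPolynomial (Fin (N + 2)) K) = 0 := by
              have hpi : p ≠ i := fun hh => hip hh.symm
              rw [degreeOf_X]
              simp [hpi]
            have h5 : degreeOf p (a i * X i) = 0 :=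
              Nat.le_zero.1 ((degreeOf_mul_le _ _ _).trans (by rw [ha0, hXi]))
            refine Nat.le_zero.1 ((degreeOf_add_le _ _ _).trans ?_)
            rw [h5, hb0]
            simp
        have h7 := degreeOf_mul_le p (D (X i)) (pderiv i g)
        have h8 := degreeOf_pderiv_le' i p g
        omega
  -- Use the Mathieu-Zhao property with a = 1, b = X m
  have hone : (1 : MvPolynomial (Fin (N + 2)) K) ∈ LinearMap.range D.toLinearMap :=
    ⟨X z, hD1'⟩
  obtain ⟨M0, hM0⟩ := hMZ 1 (X m) (fun k hk => by simpa using hone)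
  have hXm : X m ∈ LinearMap.range D.toLinearMap := by
    simpa using hM0 M0 le_rfl
  obtain ⟨f, hf0⟩ := hXm
  have hf : D f = X m := hf0
  have hfne : f ≠ 0 := by
    intro hh
    rw [hh, map_zero] at hf
    exact X_ne_zero m hf.symm
  -- the contradiction
  by_cases hd0 : degreeOf m f = 0
  · have hp0 : pderiv m f = 0 := pderiv_zero_of_degreeOf_zero' hd0
    have h1 := hiter 1 f
    rw [hf] at h1
    simp [hp0] at h1
  · obtain ⟨hgne, hgdeg⟩ := iterate_pderiv' (degreeOf m f) f rfl hfne
    set g := (pderiv m)^[degreeOf m f] f with hg_def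
    have hpg : pderiv m g = 0 := pderiv_zero_of_degreeOf_zero' hgdeg
    have hA := claimA g hpg
    have hprod : degreeOf p (a m * g) = degreeOf p (a m) + degreeOf p g :=
      degreeOf_mul_eq' p (a m) g ham hgne
    have hkey := hiter (degreeOf m f) f
    rw [hf] at hkey
    by_cases hd1 : degreeOf m f = 1
    · rw [hd1] at hkey
      simp only [Function.iterate_one, pderiv_X_self, one_nsmul] at hkey
      have hg1 : g = (pderiv m)^[1] f := by rw [hg_def, hd1]
      have heq : a m * g = 1 - D g := by
        rw [hg1]
        simp only [Function.iterate_one]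
        linear_combination -hkey
      have h9 : degreeOf p (1 - D g) ≤ degreeOf p g := by
        rw [sub_eq_add_neg]
        refine (degreeOf_add_le _ _ _).trans ?_
        rw [degreeOf_neg']
        have h1 : degreeOf p (1 : MvPolynomial (Fin (N + 2)) K) = 0 := by
          simpa using degreeOf_C (1 : K) p
        exact max_le (by omega) hA
      rw [heq] at hprod
      omega
    · -- degreeOf m f ≥ 2
      have hd2 : 2 ≤ degreeOf m f := by omega
      have hL : (pderiv m)^[degreeOf m f] (X m : MvPolynomial (Fin (N + 2)) K) = 0 := by
        obtain ⟨k, hk⟩ : ∃ k, degreeOf m f = k + 1 + 1 := ⟨degreeOf m f - 2, by omega⟩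
        rw [hk, Function.iterate_succ_apply, Function.iterate_succ_apply, pderiv_X_self]
        rw [show pderiv m (1 : MvPolynomial (Fin (N + 2)) K) = 0 from pderiv_one]
        exact Function.iterate_fixed (map_zero _) k
      rw [hL] at hkey
      have hDg : D g = -((degreeOf m f) • (a m * g)) := eq_neg_of_add_eq_zero_left hkey.symm
      have hcast : (degreeOf m f) • (a m * g) = C ((degreeOf m f : ℕ) : K) * (a m * g) := by
        rw [nsmul_eq_mul, ← map_natCast (C : K →+* MvPolynomial (Fin (N + 2)) K)]
      have h10 : degreeOf p (D g) = degreeOf p (a m) + degreeOf p g := by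
        rw [hDg, degreeOf_neg', hcast,
          degreeOf_C_mul_eq' (Nat.cast_ne_zero.2 (by omega)) p (a m * g), hprod]
      omega
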